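/- Let P be a graphoid over V, let π be a permutation, and suppose j → k is a covered edge in the induced DAG G_π, with π = ⟨δ₁, j, δ₂, k, δ₃⟩. Then the permutation τ = ⟨δ₁, j, k, δ₂, δ₃⟩ (moving k to immediately after j) induces the same DAG: G_π = G_τ. -/

import Mathlib

open Classical
attribute [local instance] Classical.propDecidable

variable {V : Type} [Fintype V] [DecidableEq V]

/-- A conditional independence model over variable set `V`:
`I A B C` means `A` is independent of `B` given `C`. -/
abbrev IndepModel (V : Type) :=
  Finset V → Finset V → Finset V → Prop

/-- Semigraphoid axioms. -/
structure Semigraphoid (I : IndepModel V) : Prop where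
  symm : ∀ A B C, I A B C → I B A C
  decomposition : ∀ A B W C, I A (B ∪ W) C → I A B C ∧ I A W C
  weakUnion : ∀ A B W C, I A (B ∪ W) C → I A B (C ∪ W)
  contraction : ∀ A B W C, I A B C → I A W (C ∪ B) → I A (B ∪ W) C

/-- Graphoid axioms. -/
structure Graphoid (I : IndepModel V) extends Semigraphoid I : Prop where
  intersection : ∀ A B W C, I A B (C ∪ W) → I A W (C ∪ B) → I A (B ∪ W) C

/-- Compositional graphoid axioms. -/
structure CompGraphoid (I : IndepModel V) extends Graphoid I : Prop where
  composition : ∀ A B W C, I A B C → I A W C → I A (B ∪ W) C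

/-- `M` is a Markov blanket of `X` relative to `Z`. -/
def MarkovBlanket (I : IndepModel V) (X : V) (Z M : Finset V) : Prop :=
  M ⊆ Z ∧ I {X} (Z \ M) M

/-- `M` is a Markov boundary (minimal Markov blanket) of `X` relative to `Z`. -/
def MarkovBoundary (I : IndepModel V) (X : V) (Z M : Finset V) : Prop :=
  MarkovBlanket I X Z M ∧ ∀ M' ⊂ M, ¬ I {X} (Z \ M') M'

/-- A directed graph on `V`, given by its finite set of directed edges. -/
abbrev EdgeSet (V : Type) := Finset (V × V)

def Adj (E : EdgeSet V) (a b : V) : Prop := (a, b) ∈ E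

/-- Acyclicity: no vertex reaches itself by a nontrivial directed path. -/
def IsDAG (E : EdgeSet V) : Prop := ∀ v, ¬ Relation.TransGen (Adj E) v v

def parents (E : EdgeSet V) (v : V) : Finset V :=
  (E.filter (fun e => e.2 = v)).image Prod.fst

def IsCollider (E : EdgeSet V) (x y z : V) : Prop := Adj E x y ∧ Adj E z y

/-- The middle vertex `y` of a path triple `x - y - z` does not block the path
given conditioning set `C`. -/
def ActiveTriple (E : EdgeSet V) (C : Finset V) (x y z : V) : Prop :=
  (IsCollider E x y z ∧ ∃ d ∈ C, Relation.ReflTransGen (Adj E) y d) ∨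
  (¬ IsCollider E x y z ∧ y ∉ C)

/-- `a` and `b` are d-connected given `C` in the graph `E`. -/
def DConn (E : EdgeSet V) (C : Finset V) (a b : V) : Prop :=
  ∃ p : List V, 2 ≤ p.length ∧ p.head? = some a ∧ p.getLast? = some b ∧
    (∀ (i : ℕ) (h : i + 1 < p.length),
      Adj E (p.get ⟨i, by omega⟩) (p.get ⟨i + 1, h⟩) ∨
      Adj E (p.get ⟨i + 1, h⟩) (p.get ⟨i, by omega⟩)) ∧
    (∀ (i : ℕ) (h : i + 2 < p.length),
      ActiveTriple E C (p.get ⟨i, by omega⟩) (p.get ⟨i + 1, by omega⟩) (p.get ⟨i + 2, h⟩))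

/-- `A` and `B` are d-separated given `C`. -/
def DSep (E : EdgeSet V) (A B C : Finset V) : Prop :=
  ∀ a ∈ A, ∀ b ∈ B, ¬ DConn E C a b

def PairwiseDisjoint3 (A B C : Finset V) : Prop :=
  Disjoint A B ∧ Disjoint A C ∧ Disjoint B C

/-- `I(G) ⊆ I(P)`: every d-separation of the graph is an independence of `I`. -/
def Markovian (E : EdgeSet V) (I : IndepModel V) : Prop :=
  ∀ A B C, PairwiseDisjoint3 A B C → DSep E A B C → I A B C

/-- `I(P) ⊆ I(G)`: every independence of `I` is a d-separation of the graph. -/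
def FaithfulTo (E : EdgeSet V) (I : IndepModel V) : Prop :=
  ∀ A B C, PairwiseDisjoint3 A B C → I A B C → DSep E A B C

/-- `I(E) ⊆ I(E')` : every d-separation statement of `E` holds in `E'`. -/
def ISub (E E' : EdgeSet V) : Prop :=
  ∀ A B C, PairwiseDisjoint3 A B C → DSep E A B C → DSep E' A B C

/-- Markov equivalence: same d-separation statements. -/
def MEquiv (E E' : EdgeSet V) : Prop := ISub E E' ∧ ISub E' E

/-- Markovian DAGs. -/
def CMC (I : IndepModel V) : Set (EdgeSet V) := {G | IsDAG G ∧ Markovian G I}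

/-- Faithful DAGs. -/
def CFC (I : IndepModel V) : Set (EdgeSet V) := {G | G ∈ CMC I ∧ FaithfulTo G I}

/-- SGS-minimal DAGs: Markovian with no Markovian proper subgraph. -/
def SGSmin (I : IndepModel V) : Set (EdgeSet V) :=
  {G | G ∈ CMC I ∧ ∀ G' ⊆ G, G' ∈ CMC I → G' = G}

/-- Frugal DAGs: Markovian with minimal edge count. -/
def Fr (I : IndepModel V) : Set (EdgeSet V) :=
  {G | G ∈ CMC I ∧ ∀ G' ∈ CMC I, G.card ≤ G'.card}

/-- Uniquely frugal DAGs. -/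
def uFr (I : IndepModel V) : Set (EdgeSet V) :=
  {G | G ∈ Fr I ∧ ∀ G' ∈ Fr I, MEquiv G' G}

/-- P-minimal DAGs: Markovian `G` such that no Markovian `G'` has `I(G) ⊊ I(G')`. -/
def Pm (I : IndepModel V) : Set (EdgeSet V) :=
  {G | G ∈ CMC I ∧ ∀ G' ∈ CMC I, ISub G G' → ISub G' G}

/-- Uniquely P-minimal DAGs. -/
def uPm (I : IndepModel V) : Set (EdgeSet V) :=
  {G | G ∈ Pm I ∧ ∀ G' ∈ Pm I, MEquiv G' G}

/-- A list is a permutation of the vertices of `V`. -/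
def IsPermList (π : List V) : Prop := π.Nodup ∧ ∀ v : V, v ∈ π

/-- The set of vertices preceding `k` in the permutation `π`. -/
def pre (π : List V) (k : V) : Finset V := (π.takeWhile (fun x => x != k)).toFinset

/-- The DAG induced from a permutation `π` by the Raskutti–Uhler (RU) construction:
`j → k` is an edge iff `j` precedes `k` in `π` and `X_j` is dependent on `X_k`
given all other predecessors of `k`. -/
noncomputable def RUedges (I : IndepModel V) (π : List V) : EdgeSet V :=
  Finset.univ.filter
    (fun e => e.1 ∈ pre π e.2 ∧ ¬ I {e.1} {e.2} ((pre π e.2).erase e.1))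

/-- `j → k` is a covered edge of `E`. -/
def CoveredEdge (E : EdgeSet V) (j k : V) : Prop :=
  (j, k) ∈ E ∧ parents E j = (parents E k).erase j

/-- `j → k` is a singular edge of `E`: no directed path from `j` to `k` other than
the edge itself. -/
def SingularEdge (E : EdgeSet V) (j k : V) : Prop :=
  (j, k) ∈ E ∧
    ∀ i, Relation.TransGen (Adj E) j i → Relation.TransGen (Adj E) i k → i = j ∨ i = k

/-- `π` is a causal order of the graph `E`: every ancestor of a vertex precedes it. -/
def CausalOrder (E : EdgeSet V) (π : List V) : Prop :=
  IsPermList π ∧ ∀ a b, Relation.TransGen (Adj E) a b → π.idxOf a < π.idxOf b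

/-- Two permutations differ by one adjacent transposition. -/
def AdjTrans (π τ : List V) : Prop :=
  ∃ (δ₁ δ₂ : List V) (a b : V), π = δ₁ ++ a :: b :: δ₂ ∧ τ = δ₁ ++ b :: a :: δ₂

/-- The non-descendants of `j` in the graph `E`. -/
noncomputable def nonDesc (E : EdgeSet V) (j : V) : Finset V :=
  Finset.univ.filter (fun i => ¬ Relation.ReflTransGen (Adj E) j i)

set_option maxHeartbeats 1000000
section Helpers
set_option linter.unusedSectionVars false
set_option linter.unusedSectionVars false
lemma pre_append (l₁ l₂ : List V) (b : V) (hb : b ∉ l₁) :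
    pre (l₁ ++ b :: l₂) b = l₁.toFinset := by
  unfold pre
  induction l₁ with
  | nil => simp
  | cons a t ih =>
    simp only [List.mem_cons, not_or] at hb
    have hab : (a != b) = true := by simp [bne, Ne.symm hb.1]
    simp only [List.cons_append, List.takeWhile_cons, hab]
    simp only [if_true, List.toFinset_cons]
    rw [ih hb.2]

lemma mem_RUedges (I : IndepModel V) (π : List V) (a b : V) :
    (a, b) ∈ RUedges I π ↔ a ∈ pre π b ∧ ¬ I {a} {b} ((pre π b).erase a) := by
  simp [RUedges]

lemma mem_parents' (E : EdgeSet V) (a b : V) : a ∈ parents E b ↔ (a, b) ∈ E := by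
  simp [parents]

lemma union_singleton' (s : Finset V) (a : V) : s ∪ {a} = insert a s := by
  ext x; simp [or_comm]

lemma singleton_union' (s : Finset V) (a : V) : {a} ∪ s = insert a s := by
  ext x; simp

set_option linter.unusedSectionVars false
lemma graphoid_combine (I : IndepModel V) (hG : Graphoid I) (k : V) (Pre : Finset V) :
    ∀ (S : Finset V), S.Nonempty → S ⊆ Pre →
      (∀ v ∈ S, I {k} {v} (Pre \ {v})) → I {k} S (Pre \ S) := by
  intro S hne
  induction hne using Finset.Nonempty.cons_induction with
  | singleton a => intro hsub h; simpa using h a (by simp)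
  | cons a s ha hs ih =>
    intro hsub h
    have hsP : s ⊆ Pre := fun x hx => hsub (Finset.mem_cons_of_mem hx)
    have haP : a ∈ Pre := hsub (Finset.mem_cons_self a s)
    have h1 : I {k} s (Pre \ s) := ih hsP (fun v hv => h v (Finset.mem_cons_of_mem hv))
    have h2 : I {k} {a} (Pre \ {a}) := h a (Finset.mem_cons_self a s)
    have e1 : Pre \ s = (Pre \ (Finset.cons a s ha)) ∪ {a} := by
      ext x; simp [Finset.mem_sdiff]; rw [or_comm]
      constructor
      · rintro ⟨hx, hxs⟩
        by_cases hxa : x = a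
        · exact Or.inr hxa
        · exact Or.inl ⟨hx, hxa, hxs⟩
      · rintro (⟨hx, _, hxs⟩ | rfl)
        · exact ⟨hx, hxs⟩
        · exact ⟨haP, ha⟩
    have e2 : Pre \ {a} = (Pre \ (Finset.cons a s ha)) ∪ s := by
      ext x; simp [Finset.mem_sdiff]
      constructor
      · rintro ⟨hx, hxa⟩; by_cases hxs : x ∈ s <;> simp_all
      · rintro (⟨hx, h1, h2⟩ | hx)
        · exact ⟨hx, h1⟩
        · exact ⟨hsP hx, by rintro rfl; exact ha hx⟩
    have := hG.intersection {k} s {a} (Pre \ (Finset.cons a s ha)) (e1 ▸ h1) (e2 ▸ h2)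
    have e3 : s ∪ {a} = Finset.cons a s ha := by
      ext x; simp [or_comm]
    rwa [e3] at this

end Helpers

/-- if `j → k` is covered in `G_π` with `π = δ₁ ++ j :: δ₂ ++ k :: δ₃`,
then moving `k` to immediately after `j` induces the same DAG. -/
theorem covered_move_preserves (I : IndepModel V) (hG : Graphoid I)
    (j k : V) (δ₁ δ₂ δ₃ : List V) (π τ : List V)
    (hπ : π = δ₁ ++ j :: (δ₂ ++ k :: δ₃))
    (hτ : τ = δ₁ ++ j :: k :: (δ₂ ++ δ₃))
    (hperm : IsPermList π)
    (hcov : CoveredEdge (RUedges I π) j k) :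
    RUedges I π = RUedges I τ := by
  by_cases hδ₂ : δ₂ = []
  · subst hδ₂; rw [hπ, hτ]; simp
  have hnd : (δ₁ ++ j :: (δ₂ ++ k :: δ₃)).Nodup := by rw [← hπ]; exact hperm.1
  simp only [List.nodup_append, List.nodup_cons, List.mem_append, List.mem_cons, not_or,
    List.disjoint_left] at hnd
  obtain ⟨hδ₁nd, ⟨⟨hjδ₂, hjk, hjδ₃⟩, hδ₂nd, ⟨hkδ₃, hδ₃nd⟩, hδ₂x⟩, hδ₁x⟩ := hnd
  replace hδ₁x : ∀ {a}, a ∈ δ₁ → ¬a = j ∧ a ∉ δ₂ ∧ ¬a = k ∧ a ∉ δ₃ := fun {a} h =>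
    ⟨fun e => hδ₁x a h a (Or.inl e) rfl, fun e => hδ₁x a h a (Or.inr (Or.inl e)) rfl,
     fun e => hδ₁x a h a (Or.inr (Or.inr (Or.inl e))) rfl,
     fun e => hδ₁x a h a (Or.inr (Or.inr (Or.inr e))) rfl⟩
  replace hδ₂x : ∀ {a}, a ∈ δ₂ → ¬a = k ∧ a ∉ δ₃ := fun {a} h =>
    ⟨fun e => hδ₂x a h a (Or.inl e) rfl, fun e => hδ₂x a h a (Or.inr e) rfl⟩
  have hjδ₁ : j ∉ δ₁ := fun h => (hδ₁x h).1 rfl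
  have hkδ₁ : k ∉ δ₁ := fun h => (hδ₁x h).2.2.1 rfl
  have hkδ₂ : k ∉ δ₂ := fun h => (hδ₂x h).1 rfl
  -- notation
  set J : Finset V := insert j δ₁.toFinset with hJdef
  set D₂ : Finset V := δ₂.toFinset with hD₂def
  have hD₂J : ∀ x ∈ D₂, x ∉ J := by
    intro x hx hxJ
    rw [hD₂def, List.mem_toFinset] at hx
    rw [hJdef, Finset.mem_insert, List.mem_toFinset] at hxJ
    rcases hxJ with rfl | hxJ
    · exact hjδ₂ hx
    · exact (hδ₁x hxJ).2.1 hx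
  -- pre computations at k
  have hPkπ : pre π k = J ∪ D₂ := by
    have hsplit : π = (δ₁ ++ j :: δ₂) ++ k :: δ₃ := by rw [hπ]; simp
    rw [hsplit, pre_append]
    · ext x; simp [hJdef, hD₂def]
    · simp only [List.mem_append, List.mem_cons, not_or]
      exact ⟨hkδ₁, fun h => hjk h.symm, hkδ₂⟩
  have hPkτ : pre τ k = J := by
    have hsplit : τ = (δ₁ ++ [j]) ++ k :: (δ₂ ++ δ₃) := by rw [hτ]; simp
    rw [hsplit, pre_append]
    · ext x; simp [hJdef]
    · intro h
      rcases List.mem_append.1 h with h | h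
      · exact hkδ₁ h
      · exact hjk (List.mem_singleton.1 h).symm
  have hPjπ : pre π j = δ₁.toFinset := by rw [hπ]; exact pre_append _ _ _ hjδ₁
  -- parent facts
  set Pa : Finset V := parents (RUedges I π) k with hPadef
  have hPapre : Pa ⊆ pre π k := by
    intro a ha
    rw [hPadef, mem_parents', mem_RUedges] at ha
    exact ha.1
  have hjPa : j ∈ Pa := (mem_parents' _ _ _).2 hcov.1
  have hPaJ : Pa ⊆ J := by
    intro a ha
    by_cases haj : a = j
    · rw [haj, hJdef]; exact Finset.mem_insert_self _ _
    · have : a ∈ parents (RUedges I π) j := by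
        rw [hcov.2, Finset.mem_erase]; exact ⟨haj, ha⟩
      rw [mem_parents', mem_RUedges] at this
      have := this.1
      rw [hPjπ] at this
      rw [hJdef]; exact Finset.mem_insert_of_mem this
  have hD₂Pa : ∀ x ∈ D₂, x ∉ Pa := fun x hx hxPa => hD₂J x hx (hPaJ hxPa)
  -- Markov blanket statement
  set N : Finset V := pre π k \ Pa with hNdef
  have hD₂N : D₂ ⊆ N := by
    intro x hx
    rw [hNdef, Finset.mem_sdiff, hPkπ]
    exact ⟨Finset.mem_union_right _ hx, hD₂Pa x hx⟩
  have hNne : N.Nonempty := by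
    obtain ⟨v, hv⟩ := List.exists_mem_of_ne_nil δ₂ hδ₂
    exact ⟨v, hD₂N (by rwa [hD₂def, List.mem_toFinset])⟩
  have hMB : I {k} N Pa := by
    have := graphoid_combine I hG k (pre π k) N hNne (Finset.sdiff_subset) ?_
    · have heq : pre π k \ N = Pa := by
        rw [hNdef, Finset.sdiff_sdiff_self_left, Finset.inter_eq_right.2 hPapre]
      rwa [heq] at this
    · intro v hv
      rw [hNdef, Finset.mem_sdiff] at hv
      have : (v, k) ∉ RUedges I π := by
        intro hmem; exact hv.2 ((mem_parents' _ _ _).2 hmem)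
      rw [mem_RUedges] at this
      push_neg at this
      have hI := this hv.1
      rw [Finset.erase_eq] at hI
      exact hG.symm _ _ _ hI
  -- the key statement (*): I {k} D₂ J
  have hstar : I {k} D₂ J := by
    have hN : D₂ ∪ (N \ D₂) = N := Finset.union_sdiff_of_subset hD₂N
    have := hG.weakUnion {k} D₂ (N \ D₂) Pa (by rwa [hN])
    have heq : Pa ∪ (N \ D₂) = J := by
      apply Finset.Subset.antisymm
      · apply Finset.union_subset hPaJ
        intro x hx
        rw [Finset.mem_sdiff, hNdef, Finset.mem_sdiff, hPkπ, Finset.mem_union] at hx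
        rcases hx.1.1 with h | h
        · exact h
        · exact absurd h hx.2
      · intro x hx
        by_cases hxPa : x ∈ Pa
        · exact Finset.mem_union_left _ hxPa
        · refine Finset.mem_union_right _ ?_
          rw [Finset.mem_sdiff, hNdef, Finset.mem_sdiff, hPkπ]
          exact ⟨⟨Finset.mem_union_left _ hx, hxPa⟩, fun hxD₂ => hD₂J x hxD₂ hx⟩
    rwa [heq] at this
  -- main extensionality
  apply Finset.ext
  rintro ⟨a, b⟩
  rw [mem_RUedges, mem_RUedges]
  have hbmem : b ∈ δ₁ ∨ b = j ∨ b ∈ δ₂ ∨ b = k ∨ b ∈ δ₃ := by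
    have := hperm.2 b
    rw [hπ] at this
    simpa [List.mem_append, List.mem_cons, or_assoc] using this
  rcases hbmem with hb | hb | hb | hb | hb
  · -- b ∈ δ₁ : same pre
    obtain ⟨α, β, hδ₁eq⟩ := List.append_of_mem hb
    have hbα : b ∉ α := by
      have : (α ++ b :: β).Nodup := by rwa [← hδ₁eq]
      rw [List.nodup_append] at this
      exact fun h => this.2.2 b h b List.mem_cons_self rfl
    have h1 : pre π b = α.toFinset := by
      have : π = α ++ b :: (β ++ j :: (δ₂ ++ k :: δ₃)) := by rw [hπ, hδ₁eq]; simp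
      rw [this, pre_append _ _ _ hbα]
    have h2 : pre τ b = α.toFinset := by
      have : τ = α ++ b :: (β ++ j :: k :: (δ₂ ++ δ₃)) := by rw [hτ, hδ₁eq]; simp
      rw [this, pre_append _ _ _ hbα]
    rw [h1, h2]
  · -- b = j : same pre
    subst hb
    have h2 : pre τ b = δ₁.toFinset := by rw [hτ]; exact pre_append _ _ _ hjδ₁
    rw [hPjπ, h2]
  · -- b ∈ δ₂ : the main case
    obtain ⟨σ₁, σ₂, hδ₂eq⟩ := List.append_of_mem hb
    have hbσ₁ : b ∉ σ₁ := by
      have : (σ₁ ++ b :: σ₂).Nodup := by rwa [← hδ₂eq]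
      rw [List.nodup_append] at this
      exact fun h => this.2.2 b h b List.mem_cons_self rfl
    have hbδ₁ : b ∉ δ₁ := fun h => (hδ₁x h).2.1 hb
    have hbj : b ≠ j := fun h => hjδ₂ (h ▸ hb)
    have hbk : b ≠ k := (hδ₂x hb).1
    have hbpre : b ∉ δ₁ ++ j :: σ₁ := by
      simp only [List.mem_append, List.mem_cons, not_or]
      exact ⟨hbδ₁, hbj, hbσ₁⟩
    set Pv : Finset V := (δ₁ ++ j :: σ₁).toFinset with hPvdef
    have h1 : pre π b = Pv := by
      have : π = (δ₁ ++ j :: σ₁) ++ b :: (σ₂ ++ k :: δ₃) := by rw [hπ, hδ₂eq]; simp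
      rw [this, pre_append _ _ _ hbpre]
    have h2 : pre τ b = insert k Pv := by
      have heq : τ = (δ₁ ++ j :: k :: σ₁) ++ b :: (σ₂ ++ δ₃) := by rw [hτ, hδ₂eq]; simp
      have hbpre' : b ∉ δ₁ ++ j :: k :: σ₁ := by
        simp only [List.mem_append, List.mem_cons, not_or]
        exact ⟨hbδ₁, hbj, hbk, hbσ₁⟩
      rw [heq, pre_append _ _ _ hbpre']
      ext x; simp [hPvdef]; tauto
    have hkPv : k ∉ Pv := by
      rw [hPvdef]
      simp only [List.mem_toFinset, List.mem_append, List.mem_cons, not_or]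
      refine ⟨hkδ₁, fun h => hjk h.symm, fun h => hkδ₂ ?_⟩
      rw [hδ₂eq]; exact List.mem_append_left _ h
    -- (**) : I {k} (insert b σ₂.toFinset) Pv, hence I {k} {b} Pv
    have hS : I {k} (insert b σ₂.toFinset) Pv := by
      have hunion : insert b σ₂.toFinset ∪ σ₁.toFinset = D₂ := by
        rw [hD₂def, hδ₂eq]; ext x; simp; tauto
      have := hG.weakUnion {k} (insert b σ₂.toFinset) σ₁.toFinset J (by rwa [hunion])
      have heq : J ∪ σ₁.toFinset = Pv := by
        rw [hJdef, hPvdef]; ext x; simp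
      rwa [heq] at this
    have hkv : I {k} {b} Pv := by
      have heq : insert b σ₂.toFinset = {b} ∪ σ₂.toFinset := by
        ext x; simp
      rw [heq] at hS
      exact (hG.decomposition {k} {b} σ₂.toFinset Pv hS).1
    rw [h1, h2]
    by_cases hak : a = k
    · subst hak
      constructor
      · rintro ⟨haPv, -⟩; exact absurd haPv hkPv
      · rintro ⟨-, hnI⟩
        exact absurd (by rwa [Finset.erase_insert hkPv]) hnI
    · have hmem : a ∈ insert k Pv ↔ a ∈ Pv := by simp [hak]
      by_cases haPv : a ∈ Pv
      · have herase : (insert k Pv).erase a = insert k (Pv.erase a) := by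
          rw [Finset.erase_insert_of_ne (Ne.symm hak)]
        rw [herase, hmem]
        have hC : Pv.erase a ∪ {a} = Pv := by
          rw [union_singleton', Finset.insert_erase haPv]
        have hvk' : I {b} {k} (Pv.erase a ∪ {a}) := by
          rw [hC]; exact hG.symm _ _ _ hkv
        constructor
        · rintro ⟨-, hnI⟩
          refine ⟨haPv, fun hI => hnI ?_⟩
          -- from I {a}{b}(insert k (C)) derive I {a}{b} C via intersection
          have h1' : I {b} {a} (Pv.erase a ∪ {k}) := by
            rw [union_singleton']; exact hG.symm _ _ _ hI
          have h2' : I {b} ({a} ∪ {k}) (Pv.erase a) := hG.intersection _ _ _ _ h1' hvk'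
          exact hG.symm _ _ _ (hG.decomposition _ _ _ _ h2').1
        · rintro ⟨-, hnI⟩
          refine ⟨haPv, fun hI => hnI ?_⟩
          -- from I {a}{b} C derive I {a}{b}(insert k C) via contraction + weak union
          have h1' : I {b} {a} (Pv.erase a) := hG.symm _ _ _ hI
          have h2' : I {b} ({a} ∪ {k}) (Pv.erase a) := hG.contraction _ _ _ _ h1' hvk'
          have h3' : I {b} {a} (Pv.erase a ∪ {k}) := hG.weakUnion _ _ _ _ h2'
          rw [union_singleton'] at h3'
          exact hG.symm _ _ _ h3'
      · constructor
        · rintro ⟨h, -⟩; exact absurd h haPv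
        · rintro ⟨h, -⟩; exact absurd (hmem.1 h) haPv
  · -- b = k : the covered-edge case
    rw [hb]
    rw [hPkπ, hPkτ]
    by_cases haJ : a ∈ J
    · have hmem1 : a ∈ J ∪ D₂ := Finset.mem_union_left _ haJ
      have haD₂ : a ∉ D₂ := fun h => hD₂J a h haJ
      have herase : (J ∪ D₂).erase a = J.erase a ∪ D₂ := by
        ext x
        simp only [Finset.mem_erase, Finset.mem_union]
        constructor
        · rintro ⟨hxa, hx | hx⟩
          · exact Or.inl ⟨hxa, hx⟩
          · exact Or.inr hx
        · rintro (⟨hxa, hx⟩ | hx)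
          · exact ⟨hxa, Or.inl hx⟩
          · exact ⟨fun h => haD₂ (h ▸ hx), Or.inr hx⟩
      rw [herase]
      simp only [hmem1, haJ, true_and]
      constructor
      · -- π edge → τ edge, i.e. I τ-side → I π-side (contrapositive)
        intro hnI
        refine fun hI => hnI ?_
        -- hI : I {a}{b}(J.erase a); derive I on J.erase a ∪ D₂
        have h1' : I {k} {a} (J.erase a) := hG.symm _ _ _ hI
        have hCA : J.erase a ∪ {a} = J := by
          rw [union_singleton', Finset.insert_erase haJ]
        have h2' : I {k} D₂ (J.erase a ∪ {a}) := by rwa [hCA]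
        have h3' : I {k} ({a} ∪ D₂) (J.erase a) := hG.contraction _ _ _ _ h1' h2'
        have h4' : I {k} {a} (J.erase a ∪ D₂) := hG.weakUnion _ _ _ _ h3'
        exact hG.symm _ _ _ h4'
      · -- τ edge → π edge, i.e. I π-side → I τ-side
        intro hnI
        refine fun hI => hnI ?_
        -- hI : I {a}{k}(J.erase a ∪ D₂); hence a ∉ Pa
        have haPa : a ∉ Pa := by
          intro haPa
          rw [hPadef, mem_parents', mem_RUedges] at haPa
          rw [hPkπ, herase] at haPa
          exact haPa.2 hI
        -- from hMB derive I {k}{a}(J.erase a)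
        have hNsplit : (J \ Pa) ∪ D₂ = N := by
          rw [hNdef, hPkπ]
          ext x
          simp only [Finset.mem_union, Finset.mem_sdiff]
          constructor
          · rintro (⟨hx, hxPa⟩ | hx)
            · exact ⟨Or.inl hx, hxPa⟩
            · exact ⟨Or.inr hx, hD₂Pa x hx⟩
          · rintro ⟨hx | hx, hxPa⟩
            · exact Or.inl ⟨hx, hxPa⟩
            · exact Or.inr hx
        have hN₁ : I {k} (J \ Pa) Pa :=
          (hG.decomposition {k} (J \ Pa) D₂ Pa (by rwa [hNsplit])).1
        have haN₁ : a ∈ J \ Pa := Finset.mem_sdiff.2 ⟨haJ, haPa⟩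
        have hsplit2 : {a} ∪ ((J \ Pa).erase a) = J \ Pa := by
          rw [singleton_union', Finset.insert_erase haN₁]
        have h1' : I {k} {a} (Pa ∪ (J \ Pa).erase a) :=
          hG.weakUnion {k} {a} ((J \ Pa).erase a) Pa (by rwa [hsplit2])
        have heq2 : Pa ∪ (J \ Pa).erase a = J.erase a := by
          ext x
          simp only [Finset.mem_union, Finset.mem_erase, Finset.mem_sdiff]
          constructor
          · rintro (hx | ⟨hxa, hx, hxPa⟩)
            · exact ⟨fun h => haPa (h ▸ hx), hPaJ hx⟩
            · exact ⟨hxa, hx⟩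
          · rintro ⟨hxa, hx⟩
            by_cases hxPa : x ∈ Pa
            · exact Or.inl hxPa
            · exact Or.inr ⟨hxa, hx, hxPa⟩
        rw [heq2] at h1'
        exact hG.symm _ _ _ h1'
    · constructor
      · rintro ⟨hmem, hnI⟩
        have haD₂ : a ∈ D₂ := by
          rcases Finset.mem_union.1 hmem with h | h
          · exact absurd h haJ
          · exact h
        have : a ∈ Pa := by
          rw [hPadef, mem_parents', mem_RUedges, hPkπ]
          exact ⟨hmem, hnI⟩
        exact absurd (hPaJ this) haJ
      · rintro ⟨hmem, -⟩
        exact absurd hmem haJ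
  · -- b ∈ δ₃ : same pre (as finsets)
    obtain ⟨ρ₁, ρ₂, hδ₃eq⟩ := List.append_of_mem hb
    have hbρ₁ : b ∉ ρ₁ := by
      have : (ρ₁ ++ b :: ρ₂).Nodup := by rwa [← hδ₃eq]
      rw [List.nodup_append] at this
      exact fun h => this.2.2 b h b List.mem_cons_self rfl
    have hbδ₁ : b ∉ δ₁ := fun h => (hδ₁x h).2.2.2 hb
    have hbj : b ≠ j := fun h => hjδ₃ (h ▸ hb)
    have hbδ₂ : b ∉ δ₂ := fun h => (hδ₂x h).2 hb
    have hbk : b ≠ k := fun h => hkδ₃ (h ▸ hb)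
    have h1 : pre π b = (δ₁ ++ j :: (δ₂ ++ k :: ρ₁)).toFinset := by
      have : π = (δ₁ ++ j :: (δ₂ ++ k :: ρ₁)) ++ b :: ρ₂ := by rw [hπ, hδ₃eq]; simp
      rw [this, pre_append]
      simp only [List.mem_append, List.mem_cons, not_or]
      exact ⟨hbδ₁, hbj, hbδ₂, hbk, hbρ₁⟩
    have h2 : pre τ b = (δ₁ ++ j :: k :: (δ₂ ++ ρ₁)).toFinset := by
      have : τ = (δ₁ ++ j :: k :: (δ₂ ++ ρ₁)) ++ b :: ρ₂ := by rw [hτ, hδ₃eq]; simp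
      rw [this, pre_append]
      simp only [List.mem_append, List.mem_cons, not_or]
      exact ⟨hbδ₁, hbj, hbk, hbδ₂, hbρ₁⟩
    have heq : pre π b = pre τ b := by
      rw [h1, h2]; ext x; simp
    rw [heq]
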